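/- Let M be a 3×3 complex matrix with Mᵀ = M, M·M = (trace M)·M and trace M ≠ 0, and let w : Fin 3 → ℂ satisfy (M·w) ⬝ᵥ (M·w) = 1. Then M = (trace M) · vecMulVec (M·w) (M·w). -/

import Mathlib

open Matrix

/-- Cayley–Hamilton for 3×3 matrices, stated explicitly. -/
lemma ch3 (A : Matrix (Fin 3) (Fin 3) ℂ) :
    A * A * A - A.trace • (A * A) +
      (A 0 0 * A 1 1 - A 0 1 * A 1 0 + A 0 0 * A 2 2 - A 0 2 * A 2 0 +
        A 1 1 * A 2 2 - A 1 2 * A 2 1) • A - A.det • (1 : Matrix (Fin 3) (Fin 3) ℂ) = 0 := by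
  ext i j
  fin_cases i <;> fin_cases j <;>
    simp [Matrix.mul_apply, Matrix.trace, Matrix.det_fin_three, Fin.sum_univ_three,
      Matrix.one_apply] <;> ring

lemma mul_vecMulVec (A : Matrix (Fin 3) (Fin 3) ℂ) (u v : Fin 3 → ℂ) :
    A * vecMulVec u v = vecMulVec (A.mulVec u) v := by
  ext i j
  simp [Matrix.mul_apply, vecMulVec_apply, Matrix.mulVec, dotProduct,
    Finset.sum_mul, mul_assoc]

lemma vecMulVec_mul (A : Matrix (Fin 3) (Fin 3) ℂ) (u v : Fin 3 → ℂ) :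
    vecMulVec u v * A = vecMulVec u (Aᵀ.mulVec v) := by
  ext i j
  simp [Matrix.mul_apply, vecMulVec_apply, Matrix.mulVec, dotProduct,
    Finset.mul_sum, mul_comm, mul_left_comm]

lemma vecMulVec_mul_vecMulVec (u v x y : Fin 3 → ℂ) :
    vecMulVec u v * vecMulVec x y = (v ⬝ᵥ x) • vecMulVec u y := by
  ext i j
  simp [Matrix.mul_apply, vecMulVec_apply, dotProduct, Fin.sum_univ_three]
  ring

lemma trace_vecMulVec' (u v : Fin 3 → ℂ) : (vecMulVec u v).trace = u ⬝ᵥ v := by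
  simp [Matrix.trace, vecMulVec_apply, dotProduct, Matrix.diag]

theorem stmt_4 (M : Matrix (Fin 3) (Fin 3) ℂ) (hsym : Mᵀ = M)
    (hM : M * M = M.trace • M) (htr : M.trace ≠ 0) (w : Fin 3 → ℂ)
    (hw : (M.mulVec w) ⬝ᵥ (M.mulVec w) = 1) :
    M = M.trace • vecMulVec (M.mulVec w) (M.mulVec w) := by
  set t := M.trace with ht
  set v := M.mulVec w with hvdef
  -- M v = t v
  have hv : M.mulVec v = t • v := by
    rw [hvdef, Matrix.mulVec_mulVec, hM, Matrix.smul_mulVec]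
  set V : Matrix (Fin 3) (Fin 3) ℂ := vecMulVec v v with hV
  have hMV : M * V = t • V := by
    rw [hV, _root_.mul_vecMulVec, hv]
    ext i j; simp [vecMulVec_apply, Matrix.smul_apply]; ring
  have hVM : V * M = t • V := by
    rw [hV, _root_.vecMulVec_mul, hsym, hv]
    ext i j; simp [vecMulVec_apply, Matrix.smul_apply]; ring
  have hVV : V * V = V := by
    rw [hV, _root_.vecMulVec_mul_vecMulVec, hw, one_smul]
  set N : Matrix (Fin 3) (Fin 3) ℂ := M - t • V with hN
  have h4 : (t • V) * (t • V) = (t * t) • V := by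
    rw [Matrix.smul_mul, Matrix.mul_smul, hVV, smul_smul]
  have hNN : N * N = t • N := by
    rw [hN, sub_mul, mul_sub, mul_sub, hM, Matrix.mul_smul, hMV, Matrix.smul_mul, hVM, h4]
    module
  have htrN : N.trace = 0 := by
    rw [hN, Matrix.trace_sub, Matrix.trace_smul, hV, trace_vecMulVec', hw]
    simp [ht]
  have htrNN : (N * N).trace = 0 := by
    rw [hNN, Matrix.trace_smul, htrN, smul_zero]
  -- second symmetric function of N is zero
  have he2 : N 0 0 * N 1 1 - N 0 1 * N 1 0 + N 0 0 * N 2 2 - N 0 2 * N 2 0 +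
      N 1 1 * N 2 2 - N 1 2 * N 2 1 = 0 := by
    have h1 : N 0 0 + N 1 1 + N 2 2 = 0 := by
      simpa [Matrix.trace, Fin.sum_univ_three, Matrix.diag] using htrN
    have h2 : (N * N) 0 0 + (N * N) 1 1 + (N * N) 2 2 = 0 := by
      simpa [Matrix.trace, Fin.sum_univ_three, Matrix.diag] using htrNN
    simp only [Matrix.mul_apply, Fin.sum_univ_three] at h2
    linear_combination (N 0 0 + N 1 1 + N 2 2) / 2 * h1 - h2 / 2
  have hch := ch3 N
  rw [he2, zero_smul, htrN, zero_smul, sub_zero, add_zero] at hch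
  -- hch : N * N * N - N.det • 1 = 0
  have hN3 : N * N * N = (t * t) • N := by
    rw [hNN, Matrix.smul_mul, hNN, smul_smul]
  rw [hN3, sub_eq_zero] at hch
  -- trace gives det = 0
  have hdet : N.det = 0 := by
    have := congrArg Matrix.trace hch
    rw [Matrix.trace_smul, Matrix.trace_smul, htrN, Matrix.trace_one] at this
    have h3 : N.det * 3 = 0 := by
      simpa [smul_eq_mul] using this.symm
    linear_combination h3 / 3
  rw [hdet, zero_smul] at hch
  have hNzero : N = 0 := by
    have := smul_eq_zero.mp hch
    rcases this with h | h
    · exact absurd (mul_self_eq_zero.mp h) htr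
    · exact h
  have : M = t • V := by
    have := sub_eq_zero.mp (by rw [← hN]; exact hNzero)
    exact this
  rw [this, hV]
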